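/- Let θ be a compactly supported Borel probability measure on ℝ^m, let n ≥ k ≥ 1, l ≥ 0 and C ≥ 1, and suppose diam(supp θ) ≤ C·2^{-l}. Then (1/n)·H(θ, D_{l+n}) = E_{l ≤ i ≤ l+n}[(1/k)·H(θ_{x,i}, D_{i+k})] + O_C(k/n), i.e. the normalized dyadic entropy at scale l+n equals the average over scales i ∈ {l,...,l+n} and over level-i components θ_{x,i} of the normalized conditional entropies across k further dyadic levels, up to an error of magnitude at most a constant (depending on C, m) times k/n. -/

import Mathlib

open MeasureTheory

/-- The level-`n` dyadic cell of `ℝ^m` with index `z : Fin m → ℤ`, i.e. the product of the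
intervals `[z_j/2^n, (z_j+1)/2^n)`. -/
def dcell {m : ℕ} (n : ℕ) (z : Fin m → ℤ) : Set (EuclideanSpace ℝ (Fin m)) :=
  {y | ∀ j, ⌊(2 : ℝ) ^ n * y j⌋ = z j}

/-- The index of the level-`n` dyadic cell containing `x`. -/
noncomputable def dIndex {m : ℕ} (n : ℕ) (x : EuclideanSpace ℝ (Fin m)) : Fin m → ℤ :=
  fun j => ⌊(2 : ℝ) ^ n * x j⌋

/-- The entropy (base-2) of `θ` with respect to the level-`n` dyadic partition of `ℝ^m`. -/
noncomputable def dyEnt {m : ℕ} (θ : Measure (EuclideanSpace ℝ (Fin m))) (n : ℕ) : ℝ :=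
  ∑' z : Fin m → ℤ, -((θ (dcell n z)).toReal * Real.logb 2 (θ (dcell n z)).toReal)

/-- The level-`i` component of `θ` at `x`: the normalized restriction of `θ` to the
level-`i` dyadic cell containing `x`. -/
noncomputable def dyComp {m : ℕ} (θ : Measure (EuclideanSpace ℝ (Fin m))) (i : ℕ)
    (x : EuclideanSpace ℝ (Fin m)) : Measure (EuclideanSpace ℝ (Fin m)) :=
  (θ (dcell i (dIndex i x)))⁻¹ • θ.restrict (dcell i (dIndex i x))

section MSEAux
variable {m : ℕ}

/-- parent index -/
def par (k : ℕ) (w : Fin m → ℤ) : Fin m → ℤ := fun j => w j / (2 ^ k : ℤ)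

lemma mem_dcell {n : ℕ} {z : Fin m → ℤ} {x : EuclideanSpace ℝ (Fin m)} :
    x ∈ dcell n z ↔ dIndex n x = z := by
  simp [dcell, dIndex, funext_iff]

lemma mem_dcell_self (n : ℕ) (x : EuclideanSpace ℝ (Fin m)) : x ∈ dcell n (dIndex n x) :=
  mem_dcell.2 rfl

lemma measurableSet_dcell (n : ℕ) (z : Fin m → ℤ) : MeasurableSet (dcell (m := m) n z) := by
  have : dcell (m := m) n z =
      ⋂ j, (fun y : EuclideanSpace ℝ (Fin m) => (2:ℝ)^n * y j) ⁻¹'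
        (Set.Ico (z j : ℝ) (z j + 1)) := by
    ext y
    simp only [dcell, Set.mem_setOf_eq, Set.mem_iInter, Set.mem_preimage, Set.mem_Ico]
    exact forall_congr' fun j => Int.floor_eq_iff
  rw [this]
  exact MeasurableSet.iInter fun j =>
    (measurable_const.mul ((measurable_pi_apply j).comp (WithLp.measurable_ofLp 2 _))) measurableSet_Ico

lemma floor_div_nat (a : ℝ) (d : ℕ) (hd : 0 < d) : ⌊a⌋ / (d : ℤ) = ⌊a / d⌋ := by
  have hd' : (0:ℝ) < d := by exact_mod_cast hd
  have hdz : (0:ℤ) < (d:ℤ) := by exact_mod_cast hd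
  rw [eq_comm, Int.floor_eq_iff]
  constructor
  · rw [le_div_iff₀ hd']
    calc ((⌊a⌋ / (d:ℤ) : ℤ) : ℝ) * d = ((⌊a⌋ / (d:ℤ) * d : ℤ) : ℝ) := by push_cast; ring
    _ ≤ (⌊a⌋ : ℝ) := by exact_mod_cast Int.ediv_mul_le ⌊a⌋ hdz.ne'
    _ ≤ a := Int.floor_le a
  · rw [div_lt_iff₀ hd']
    have h1 : ⌊a⌋ < (⌊a⌋ / (d:ℤ) + 1) * d := Int.lt_ediv_add_one_mul_self ⌊a⌋ hdz
    calc a < (⌊a⌋ : ℝ) + 1 := Int.lt_floor_add_one a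
    _ ≤ ((⌊a⌋ / (d:ℤ) + 1) * d : ℤ) := by exact_mod_cast h1
    _ = ((⌊a⌋ / (d:ℤ) : ℤ) : ℝ) * d + d := by push_cast; ring
    _ ≤ _ := by push_cast; ring_nf; rfl

lemma par_dIndex (i k : ℕ) (x : EuclideanSpace ℝ (Fin m)) :
    par k (dIndex (i + k) x) = dIndex i x := by
  funext j
  show ⌊(2:ℝ) ^ (i+k) * x j⌋ / ((2:ℤ) ^ k) = ⌊(2:ℝ) ^ i * x j⌋
  have : ((2:ℤ)^k) = ((2^k : ℕ) : ℤ) := by push_cast; ring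
  rw [this, floor_div_nat _ _ (pow_pos (by norm_num : (0:ℕ) < 2) k)]
  congr 1
  have h2 : ((2^k : ℕ) : ℝ) = (2:ℝ)^k := by push_cast; ring
  rw [h2, pow_add]
  field_simp

lemma dcell_subset_par (i k : ℕ) (w : Fin m → ℤ) :
    dcell (i + k) w ⊆ dcell i (par k w) := by
  intro x hx
  rw [mem_dcell] at hx ⊢
  rw [← hx, par_dIndex]

lemma dcell_disjoint {n : ℕ} {z z' : Fin m → ℤ} (h : z ≠ z') :
    Disjoint (dcell (m := m) n z) (dcell n z') := by
  rw [Set.disjoint_left]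
  intro x hx hx'
  rw [mem_dcell] at hx hx'
  exact h (hx ▸ hx')
lemma abs_coord_le_dist (x y : EuclideanSpace ℝ (Fin m)) (j : Fin m) :
    |x j - y j| ≤ dist x y := by
  rw [EuclideanSpace.dist_eq, ← Real.sqrt_sq_eq_abs]
  apply Real.sqrt_le_sqrt
  have := Finset.single_le_sum (f := fun j => dist (x j) (y j) ^ 2)
    (fun i _ => sq_nonneg _) (Finset.mem_univ j)
  simpa [Real.dist_eq] using this

lemma finite_cells (s : Set (EuclideanSpace ℝ (Fin m))) (hb : Bornology.IsBounded s) (n : ℕ) :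
    {z : Fin m → ℤ | (dcell n z ∩ s).Nonempty}.Finite := by
  obtain ⟨R, hR⟩ := hb.subset_closedBall 0
  set c : ℤ := ⌈(2:ℝ)^n * R⌉ + 1 with hc
  apply Set.Finite.subset (Finset.Icc (fun _ : Fin m => -c) (fun _ => c)).finite_toSet
  rintro z ⟨y, hy, hys⟩
  have hz : dIndex n y = z := mem_dcell.1 hy
  have hyR : ∀ j, |y j| ≤ R := by
    intro j
    have h1 := abs_coord_le_dist y 0 j
    have h2 : dist y 0 ≤ R := by
      have := hR hys; simpa [Metric.mem_closedBall] using this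
    simp only [PiLp.zero_apply, sub_zero] at h1
    linarith
  have hRt : ∀ j, |(2:ℝ)^n * y j| ≤ (2:ℝ)^n * R := by
    intro j
    rw [abs_mul, abs_of_pos (by positivity : (0:ℝ) < (2:ℝ)^n)]
    exact mul_le_mul_of_nonneg_left (hyR j) (by positivity)
  simp only [Finset.coe_Icc, Set.mem_Icc, Pi.le_def]
  constructor
  · intro j
    have ht := (abs_le.1 (hRt j)).1
    have : ((-c : ℤ) : ℝ) < (z j : ℝ) := by
      rw [← hz]
      have hfl : (2:ℝ)^n * y j - 1 < (dIndex n y j : ℝ) := Int.sub_one_lt_floor _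
      have : ((-c : ℤ) : ℝ) = -(⌈(2:ℝ)^n * R⌉ : ℝ) - 1 := by push_cast [hc]; ring
      rw [this]
      have := Int.le_ceil ((2:ℝ)^n * R)
      linarith
    exact_mod_cast this.le
  · intro j
    have ht := (abs_le.1 (hRt j)).2
    have : (z j : ℝ) ≤ (c : ℝ) := by
      rw [← hz]
      have hfl : (dIndex n y j : ℝ) ≤ (2:ℝ)^n * y j := Int.floor_le _
      have := Int.le_ceil ((2:ℝ)^n * R)
      push_cast [hc]
      linarith
    exact_mod_cast this

/-- cells meeting a small-diameter set around x₀ -/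
lemma cells_subset_Icc (s : Set (EuclideanSpace ℝ (Fin m))) (hb : Bornology.IsBounded s)
    (x₀ : EuclideanSpace ℝ (Fin m)) (hx₀ : x₀ ∈ s) (l : ℕ) (C : ℝ)
    (hd : Metric.diam s ≤ C * (2:ℝ) ^ (-(l:ℤ))) :
    {z : Fin m → ℤ | (dcell l z ∩ s).Nonempty} ⊆
      ↑(Finset.Icc (fun j => dIndex l x₀ j - ⌈C⌉) (fun j => dIndex l x₀ j + ⌈C⌉)) := by
  rintro z ⟨y, hy, hys⟩
  have hz : dIndex l y = z := mem_dcell.1 hy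
  have hdy : ∀ j, |(2:ℝ)^l * y j - (2:ℝ)^l * x₀ j| ≤ C := by
    intro j
    have h1 := abs_coord_le_dist y x₀ j
    have h2 : dist y x₀ ≤ C * (2:ℝ) ^ (-(l:ℤ)) :=
      le_trans (Metric.dist_le_diam_of_mem hb hys hx₀) hd
    rw [show (2:ℝ)^l * y j - (2:ℝ)^l * x₀ j = (2:ℝ)^l * (y j - x₀ j) by ring,
      abs_mul, abs_of_pos (by positivity : (0:ℝ) < (2:ℝ)^l)]
    calc (2:ℝ)^l * |y j - x₀ j| ≤ (2:ℝ)^l * (C * (2:ℝ) ^ (-(l:ℤ))) := by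
          exact mul_le_mul_of_nonneg_left (le_trans h1 h2) (by positivity)
    _ = C := by
        rw [mul_comm C, ← mul_assoc, ← zpow_natCast (2:ℝ) l, ← zpow_add₀ (by norm_num : (2:ℝ) ≠ 0)]
        simp
  -- floor difference bound
  have key : ∀ (a b : ℝ), |a - b| ≤ C → ⌊a⌋ - ⌊b⌋ ≤ ⌈C⌉ := by
    intro a b hab
    have h1 : (⌊a⌋ : ℝ) ≤ a := Int.floor_le a
    have h2 : b - 1 < (⌊b⌋ : ℝ) := Int.sub_one_lt_floor b
    have h3 : a - b ≤ C := (abs_le.1 hab).2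
    have h4 : C ≤ (⌈C⌉ : ℝ) := Int.le_ceil C
    have h5 : ((⌊a⌋ - ⌊b⌋ : ℤ) : ℝ) < ((⌈C⌉ + 1 : ℤ) : ℝ) := by push_cast; linarith
    exact Int.lt_add_one_iff.1 (by exact_mod_cast h5)
  rw [Finset.mem_coe, Finset.mem_Icc]
  refine ⟨fun j => ?_, fun j => ?_⟩
  · have hk := key ((2:ℝ)^l * x₀ j) ((2:ℝ)^l * y j) (by rw [abs_sub_comm]; exact hdy j)
    have hzz : z j = ⌊(2:ℝ)^l * y j⌋ := by rw [← hz]; rfl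
    simp only [dIndex]
    omega
  · have hk := key ((2:ℝ)^l * y j) ((2:ℝ)^l * x₀ j) (hdy j)
    have hzz : z j = ⌊(2:ℝ)^l * y j⌋ := by rw [← hz]; rfl
    simp only [dIndex]
    omega

noncomputable def phi (p : ℝ) : ℝ := -(p * Real.logb 2 p)

lemma phi_zero : phi 0 = 0 := by simp [phi]
lemma phi_one : phi 1 = 0 := by simp [phi]

lemma phi_nonneg {p : ℝ} (h0 : 0 ≤ p) (h1 : p ≤ 1) : 0 ≤ phi p := by
  have := Real.logb_nonpos (b := 2) (by norm_num) h0 h1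
  have : p * Real.logb 2 p ≤ 0 := mul_nonpos_of_nonneg_of_nonpos h0 this
  simp only [phi]; linarith

lemma phi_div_eq (p q : ℝ) (hp : 0 < p) (hq : 0 ≤ q) :
    p * phi (q / p) = phi q + q * Real.logb 2 p := by
  rcases eq_or_lt_of_le hq with h | h
  · simp [← h, phi]
  · simp only [phi]
    rw [Real.logb_div h.ne' hp.ne']
    field_simp
    ring

lemma sum_phi_lower {ι : Type*} (F : Finset ι) (q : ι → ℝ) (hq : ∀ w ∈ F, 0 ≤ q w) :
    phi (∑ w ∈ F, q w) ≤ ∑ w ∈ F, phi (q w) := by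
  set p := ∑ w ∈ F, q w with hp
  have hpe : phi p = ∑ w ∈ F, -(q w * Real.logb 2 p) := by
    rw [Finset.sum_neg_distrib, ← Finset.sum_mul, ← hp]; rfl
  rw [hpe]
  apply Finset.sum_le_sum
  intro w hw
  rcases eq_or_lt_of_le (hq w hw) with h | h
  · simp [← h, phi]
  · have hqp : q w ≤ p := Finset.single_le_sum hq hw
    have hlog : Real.logb 2 (q w) ≤ Real.logb 2 p :=
      (Real.logb_le_logb (by norm_num) h (lt_of_lt_of_le h hqp)).2 hqp
    simp only [phi, neg_le_neg_iff]
    exact mul_le_mul_of_nonneg_left hlog h.le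

lemma sum_phi_upper {ι : Type*} (F : Finset ι) (q : ι → ℝ) (hq : ∀ w ∈ F, 0 ≤ q w)
    (N : ℕ) (hN : F.card ≤ N) (hN0 : 0 < N) :
    ∑ w ∈ F, phi (q w) ≤ phi (∑ w ∈ F, q w) + (∑ w ∈ F, q w) * Real.logb 2 N := by
  set p := ∑ w ∈ F, q w with hp
  have hppos : 0 ≤ p := Finset.sum_nonneg hq
  have h2 : (0:ℝ) < Real.log 2 := Real.log_pos one_lt_two
  have hNpos : (0:ℝ) < N := by exact_mod_cast hN0
  have key : ∀ w ∈ F, phi (q w) ≤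
      -(q w * Real.logb 2 p) + q w * Real.logb 2 N + (p / N - q w) / Real.log 2 := by
    intro w hw
    rcases eq_or_lt_of_le (hq w hw) with h | h
    · rw [← h, phi_zero]
      have h0 : (0:ℝ) ≤ (p / N - 0) / Real.log 2 :=
        div_nonneg (by rw [sub_zero]; exact div_nonneg hppos hNpos.le) h2.le
      simpa using h0
    · have hqp : q w ≤ p := Finset.single_le_sum hq hw
      have hpp : 0 < p := lt_of_lt_of_le h hqp
      have hx : (0:ℝ) < p / (q w * N) := by positivity
      have hlog : Real.log (p / (q w * N)) ≤ p / (q w * N) - 1 :=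
        Real.log_le_sub_one_of_pos hx
      have expand : Real.log (p / (q w * N)) =
          Real.log p - Real.log (q w) - Real.log N := by
        rw [Real.log_div hpp.ne' (by positivity), Real.log_mul h.ne' hNpos.ne']
        ring
      have hL : q w * (Real.log p - Real.log (q w) - Real.log N) ≤ p / N - q w := by
        have h1 : q w * (Real.log p - Real.log (q w) - Real.log N)
            ≤ q w * (p / (q w * N) - 1) := by
          rw [← expand]
          exact mul_le_mul_of_nonneg_left hlog h.le
        have h2' : q w * (p / (q w * N) - 1) = p / N - q w := by
          field_simp
        linarith
      have hinv : (0:ℝ) ≤ (Real.log 2)⁻¹ := by positivity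
      have hm := mul_le_mul_of_nonneg_right hL hinv
      simp only [phi, Real.logb, div_eq_mul_inv] at hm ⊢
      ring_nf at hm ⊢
      linarith
  have S1 : ∑ w ∈ F, -(q w * Real.logb 2 p) = phi p := by
    rw [Finset.sum_neg_distrib, ← Finset.sum_mul, ← hp]; rfl
  have S2 : ∑ w ∈ F, q w * Real.logb 2 (N:ℝ) = p * Real.logb 2 (N:ℝ) := by
    rw [← Finset.sum_mul, ← hp]
  have S3 : ∑ w ∈ F, (p / N - q w) / Real.log 2
      = ((F.card : ℝ) * (p / N) - p) / Real.log 2 := by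
    rw [← Finset.sum_div, Finset.sum_sub_distrib, Finset.sum_const, ← hp]
    simp [nsmul_eq_mul]
  calc ∑ w ∈ F, phi (q w)
      ≤ ∑ w ∈ F, (-(q w * Real.logb 2 p) + q w * Real.logb 2 N + (p / N - q w) / Real.log 2) :=
        Finset.sum_le_sum key
    _ = phi p + p * Real.logb 2 N + ((F.card : ℝ) * (p / N) - p) / Real.log 2 := by
        rw [Finset.sum_add_distrib, Finset.sum_add_distrib, S1, S2, S3]
    _ ≤ phi p + p * Real.logb 2 N := by
        have hcard : (F.card : ℝ) ≤ N := by exact_mod_cast hN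
        have hle : (F.card : ℝ) * (p / N) - p ≤ 0 := by
          have h1 : (F.card : ℝ) * (p / N) ≤ (N : ℝ) * (p / N) :=
            mul_le_mul_of_nonneg_right hcard (by positivity)
          have h2'' : (N:ℝ) * (p / N) = p := by field_simp
          linarith
        have := div_nonpos_of_nonpos_of_nonneg hle h2.le
        linarith

section Core
variable {m : ℕ}

def IsSupp (θ : Measure (EuclideanSpace ℝ (Fin m))) (n : ℕ) (T : Finset (Fin m → ℤ)) : Prop :=
  ∀ z ∉ T, θ (dcell n z) = 0

lemma iUnion_dcell (n : ℕ) : (⋃ z : Fin m → ℤ, dcell n z) = Set.univ := by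
  ext x
  simp only [Set.mem_iUnion, Set.mem_univ, iff_true]
  exact ⟨dIndex n x, mem_dcell_self n x⟩

lemma pairwise_dcell (n : ℕ) :
    Pairwise (Function.onFun Disjoint (fun z : Fin m → ℤ => dcell n z)) :=
  fun _ _ h => dcell_disjoint h

lemma sum_cells (θ : Measure (EuclideanSpace ℝ (Fin m))) [IsProbabilityMeasure θ]
    {n : ℕ} {T : Finset (Fin m → ℤ)} (hT : IsSupp θ n T) :
    ∑ z ∈ T, θ (dcell n z) = 1 := by
  have h1 : θ Set.univ = 1 := measure_univ
  rw [← iUnion_dcell (m := m) n,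
    measure_iUnion (pairwise_dcell n) (fun z => measurableSet_dcell n z)] at h1
  rw [← h1]
  exact (tsum_eq_sum (fun z hz => hT z hz)).symm

lemma sum_cells_real (θ : Measure (EuclideanSpace ℝ (Fin m))) [IsProbabilityMeasure θ]
    {n : ℕ} {T : Finset (Fin m → ℤ)} (hT : IsSupp θ n T) :
    ∑ z ∈ T, (θ (dcell n z)).toReal = 1 := by
  rw [← ENNReal.toReal_sum (fun z _ => measure_ne_top θ _), sum_cells θ hT]
  simp

lemma dyEnt_eq_sum (θ : Measure (EuclideanSpace ℝ (Fin m)))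
    {n : ℕ} {T : Finset (Fin m → ℤ)} (hT : IsSupp θ n T) :
    dyEnt θ n = ∑ z ∈ T, phi ((θ (dcell n z)).toReal) := by
  simp only [dyEnt, phi]
  exact tsum_eq_sum (fun z hz => by simp [hT z hz])

lemma toReal_le_one (θ : Measure (EuclideanSpace ℝ (Fin m))) [IsProbabilityMeasure θ]
    (A : Set (EuclideanSpace ℝ (Fin m))) : (θ A).toReal ≤ 1 := by
  have := prob_le_one (μ := θ) (s := A)
  exact ENNReal.toReal_le_of_le_ofReal zero_le_one (by simpa using this)

lemma dyEnt_nonneg (θ : Measure (EuclideanSpace ℝ (Fin m))) [IsProbabilityMeasure θ]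
    {n : ℕ} {T : Finset (Fin m → ℤ)} (hT : IsSupp θ n T) : 0 ≤ dyEnt θ n := by
  rw [dyEnt_eq_sum θ hT]
  exact Finset.sum_nonneg fun z _ => phi_nonneg ENNReal.toReal_nonneg (toReal_le_one θ _)

/-- decomposition of a level-`i` cell measure into its level-`i+k` children -/
lemma cell_children (θ : Measure (EuclideanSpace ℝ (Fin m)))
    {i k : ℕ} {T' : Finset (Fin m → ℤ)} (hT' : IsSupp θ (i + k) T') (z : Fin m → ℤ) :
    θ (dcell i z) = ∑ w ∈ T'.filter (fun w => par k w = z), θ (dcell (i + k) w) := by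
  have hset : dcell i z = ⋃ w : {w : Fin m → ℤ // par k w = z}, dcell (i + k) (w : Fin m → ℤ) := by
    ext x
    constructor
    · intro hx
      refine Set.mem_iUnion.2 ⟨⟨dIndex (i + k) x, ?_⟩, mem_dcell_self _ _⟩
      rw [par_dIndex]
      exact mem_dcell.1 hx
    · intro hx
      obtain ⟨w, hw⟩ := Set.mem_iUnion.1 hx
      have := dcell_subset_par i k (w : Fin m → ℤ) hw
      rwa [w.2] at this
  rw [hset, measure_iUnion
    (fun a b hab => dcell_disjoint (fun h => hab (Subtype.ext h)))
    (fun w => measurableSet_dcell _ _)]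
  erw [tsum_subtype {w : Fin m → ℤ | par k w = z} (fun w => θ (dcell (i + k) w))]
  rw [tsum_eq_sum (s := T'.filter (fun w => par k w = z))]
  · apply Finset.sum_congr rfl
    intro w hw
    have hm : w ∈ {w : Fin m → ℤ | par k w = z} := (Finset.mem_filter.1 hw).2
    exact Set.indicator_of_mem hm _
  · intro w hw
    by_cases hpw : par k w = z
    · have hwT : w ∉ T' := fun hmem => hw (Finset.mem_filter.2 ⟨hmem, hpw⟩)
      rw [Set.indicator_of_mem (show w ∈ {w : Fin m → ℤ | par k w = z} from hpw)]
      exact hT' w hwT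
    · exact Set.indicator_of_notMem
        (show w ∉ {w : Fin m → ℤ | par k w = z} from hpw) _

lemma cell_children_real (θ : Measure (EuclideanSpace ℝ (Fin m))) [IsProbabilityMeasure θ]
    {i k : ℕ} {T' : Finset (Fin m → ℤ)} (hT' : IsSupp θ (i + k) T') (z : Fin m → ℤ) :
    (θ (dcell i z)).toReal
      = ∑ w ∈ T'.filter (fun w => par k w = z), (θ (dcell (i + k) w)).toReal := by
  rw [cell_children θ hT' z, ENNReal.toReal_sum (fun w _ => measure_ne_top θ _)]

/-- the number of level-`i+k` children of a level-`i` cell -/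
lemma card_children_le {k : ℕ} (T' : Finset (Fin m → ℤ)) (z : Fin m → ℤ) :
    (T'.filter (fun w => par k w = z)).card ≤ 2 ^ (k * m) := by
  have hsub : T'.filter (fun w => par k w = z) ⊆
      Finset.Icc (fun j => 2 ^ k * z j) (fun j => 2 ^ k * z j + (2 ^ k - 1)) := by
    intro w hw
    have hpw : par k w = z := (Finset.mem_filter.1 hw).2
    rw [Finset.mem_Icc]
    refine ⟨fun j => ?_, fun j => ?_⟩
    · have hzj : w j / (2 ^ k : ℤ) = z j := congrFun hpw j
      have h1 : w j / (2 ^ k : ℤ) * 2 ^ k ≤ w j :=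
        Int.ediv_mul_le _ (by positivity)
      rw [hzj] at h1
      show 2 ^ k * z j ≤ w j
      linarith
    · have hzj : w j / (2 ^ k : ℤ) = z j := congrFun hpw j
      have h2 : w j < (w j / (2 ^ k : ℤ) + 1) * 2 ^ k :=
        Int.lt_ediv_add_one_mul_self _ (by positivity)
      rw [hzj] at h2
      show w j ≤ 2 ^ k * z j + (2 ^ k - 1)
      linarith
  calc (T'.filter (fun w => par k w = z)).card
      ≤ (Finset.Icc (fun j => 2 ^ k * z j) (fun j => 2 ^ k * z j + (2 ^ k - 1))).card :=
        Finset.card_le_card hsub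
    _ = 2 ^ (k * m) := by
        rw [Pi.card_Icc]
        have : ∀ j : Fin m, (Finset.Icc (2 ^ k * z j) (2 ^ k * z j + (2 ^ k - 1))).card
            = 2 ^ k := by
          intro j
          rw [Int.card_Icc]
          have h3 : (0:ℤ) < 2 ^ k := by positivity
          have : (2 ^ k * z j + (2 ^ k - 1) + 1 - 2 ^ k * z j) = 2 ^ k := by ring
          rw [this]
          have h4 : ((2:ℤ)^k) = ((2^k : ℕ) : ℤ) := by push_cast; ring
          rw [h4, Int.toNat_natCast]
        simp only [this, Finset.prod_const, Finset.card_univ, Fintype.card_fin]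
        rw [← pow_mul]

end Core

section Pair
variable {m : ℕ} (θ : Measure (EuclideanSpace ℝ (Fin m))) [IsProbabilityMeasure θ]

lemma measure_dcell_mono_par {i k : ℕ} (w : Fin m → ℤ) :
    θ (dcell (i + k) w) ≤ θ (dcell i (par k w)) :=
  measure_mono (dcell_subset_par i k w)

/-- monotonicity and bounded growth of dyadic entropy -/
lemma dyEnt_pair {i k : ℕ} {T T' : Finset (Fin m → ℤ)}
    (hT : IsSupp θ i T) (hT' : IsSupp θ (i + k) T')
    (hmaps : ∀ w ∈ T', par k w ∈ T) :
    dyEnt θ i ≤ dyEnt θ (i + k) ∧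
      dyEnt θ (i + k) ≤ dyEnt θ i + (k * m : ℕ) := by
  have hfib : dyEnt θ (i + k) = ∑ z ∈ T, ∑ w ∈ T'.filter (fun w => par k w = z),
      phi ((θ (dcell (i + k) w)).toReal) := by
    rw [dyEnt_eq_sum θ hT', Finset.sum_fiberwise_of_maps_to hmaps]
  have hbase : dyEnt θ i = ∑ z ∈ T, phi ((θ (dcell i z)).toReal) := dyEnt_eq_sum θ hT
  have hq : ∀ (z : Fin m → ℤ), ∀ w ∈ T'.filter (fun w => par k w = z),
      (0:ℝ) ≤ (θ (dcell (i + k) w)).toReal := fun _ _ _ => ENNReal.toReal_nonneg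
  constructor
  · rw [hfib, hbase]
    apply Finset.sum_le_sum
    intro z _
    rw [cell_children_real θ hT' z]
    exact sum_phi_lower _ _ (hq z)
  · rw [hfib]
    have hlogN : Real.logb 2 ((2 ^ (k * m) : ℕ) : ℝ) = (k * m : ℕ) := by
      push_cast
      rw [Real.logb_pow, Real.logb_self_eq_one (by norm_num)]
      simp
    calc ∑ z ∈ T, ∑ w ∈ T'.filter (fun w => par k w = z), phi ((θ (dcell (i + k) w)).toReal)
        ≤ ∑ z ∈ T, (phi ((θ (dcell i z)).toReal)
            + (θ (dcell i z)).toReal * Real.logb 2 ((2 ^ (k * m) : ℕ) : ℝ)) := by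
          apply Finset.sum_le_sum
          intro z _
          have := sum_phi_upper (T'.filter (fun w => par k w = z))
            (fun w => (θ (dcell (i + k) w)).toReal) (hq z)
            (2 ^ (k * m)) (card_children_le T' z) (by positivity)
          rwa [← cell_children_real θ hT' z] at this
      _ = dyEnt θ i + (k * m : ℕ) := by
          rw [Finset.sum_add_distrib, ← hbase, ← Finset.sum_mul, sum_cells_real θ hT,
            one_mul, hlogN]

end Pair

section Integral
variable {m : ℕ} (θ : Measure (EuclideanSpace ℝ (Fin m))) [IsProbabilityMeasure θ]

lemma integral_dyEnt_comp {i k : ℕ} {T T' : Finset (Fin m → ℤ)}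
    (hT : IsSupp θ i T) (hT' : IsSupp θ (i + k) T')
    (hmaps : ∀ w ∈ T', par k w ∈ T) :
    ∫ x, dyEnt (dyComp θ i x) (i + k) ∂θ = dyEnt θ (i + k) - dyEnt θ i := by
  set g : (Fin m → ℤ) → ℝ :=
    fun z => dyEnt ((θ (dcell i z))⁻¹ • θ.restrict (dcell i z)) (i + k) with hg
  have hnull : θ (⋃ z : {z : Fin m → ℤ // z ∉ T}, dcell i (z : Fin m → ℤ)) = 0 := by
    rw [measure_iUnion
      (fun a b hab => dcell_disjoint (fun h => hab (Subtype.ext h)))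
      (fun _ => measurableSet_dcell _ _)]
    exact ENNReal.tsum_eq_zero.2 fun z => hT z z.2
  have hae : (fun x => dyEnt (dyComp θ i x) (i + k)) =ᵐ[θ]
      (fun x => ∑ z ∈ T, Set.indicator (dcell i z) (fun _ => g z) x) := by
    apply Filter.eventuallyEq_of_mem (compl_mem_ae_iff.2 hnull)
    intro x hx
    have hmem : dIndex i x ∈ T := by
      by_contra hc
      exact hx (Set.mem_iUnion.2 ⟨⟨dIndex i x, hc⟩, mem_dcell_self i x⟩)
    have hsum : ∑ z ∈ T, Set.indicator (dcell i z) (fun _ => g z) x = g (dIndex i x) := by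
      rw [Finset.sum_eq_single_of_mem (dIndex i x) hmem]
      · exact Set.indicator_of_mem (mem_dcell_self i x) _
      · intro z _ hne
        apply Set.indicator_of_notMem
        intro hxz
        exact hne ((mem_dcell.1 hxz) ▸ rfl)
    show dyEnt (dyComp θ i x) (i + k)
        = ∑ z ∈ T, Set.indicator (dcell i z) (fun _ => g z) x
    rw [hsum]
    rfl
  rw [integral_congr_ae hae, integral_finset_sum _ (fun z _ =>
    (integrable_indicator_iff (measurableSet_dcell i z)).2
      (integrableOn_const (measure_ne_top θ _)))]
  have hint : ∀ z ∈ T, ∫ x, Set.indicator (dcell i z) (fun _ => g z) x ∂θ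
      = (θ (dcell i z)).toReal * g z := by
    intro z _
    rw [integral_indicator_const _ (measurableSet_dcell i z), smul_eq_mul]
    rfl
  rw [Finset.sum_congr rfl hint]
  -- now the finite combinatorial identity
  have hterm : ∀ z ∈ T, (θ (dcell i z)).toReal * g z
      = (∑ w ∈ T'.filter (fun w => par k w = z), phi ((θ (dcell (i + k) w)).toReal))
        - phi ((θ (dcell i z)).toReal) := by
    intro z hz
    by_cases hp : θ (dcell i z) = 0
    · have hzero : ∀ w ∈ T'.filter (fun w => par k w = z),
          phi ((θ (dcell (i + k) w)).toReal) = 0 := by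
        intro w hw
        have hpw : par k w = z := (Finset.mem_filter.1 hw).2
        have hsub : dcell (i + k) w ⊆ dcell i z := hpw ▸ dcell_subset_par i k w
        have : θ (dcell (i + k) w) = 0 := measure_mono_null hsub hp
        simp [this, phi_zero]
      rw [Finset.sum_eq_zero hzero, hp]
      simp [phi_zero]
    · have hpne : θ (dcell i z) ≠ ⊤ := measure_ne_top θ _
      have hpr : 0 < (θ (dcell i z)).toReal := ENNReal.toReal_pos hp hpne
      have hν : ∀ w : Fin m → ℤ, ((θ (dcell i z))⁻¹ • θ.restrict (dcell i z)) (dcell (i + k) w)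
          = (θ (dcell i z))⁻¹ * θ (dcell (i + k) w ∩ dcell i z) := by
        intro w
        rw [Measure.smul_apply, Measure.restrict_apply (measurableSet_dcell _ _), smul_eq_mul]
      have hgz : g z = ∑ w ∈ T'.filter (fun w => par k w = z),
          phi ((θ (dcell (i + k) w)).toReal / (θ (dcell i z)).toReal) := by
        rw [hg]
        simp only [dyEnt, phi]
        rw [tsum_eq_sum (s := T'.filter (fun w => par k w = z)) ?van]
        case van =>
          intro w hw
          by_cases hpw : par k w = z
          · have hwT : w ∉ T' := fun hmem => hw (Finset.mem_filter.2 ⟨hmem, hpw⟩)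
            have : θ (dcell (i + k) w ∩ dcell i z) = 0 :=
              measure_mono_null Set.inter_subset_left (hT' w hwT)
            simp [hν w, this]
          · have hdisj : Disjoint (dcell (i + k) w) (dcell i z) :=
              Set.disjoint_of_subset_left (dcell_subset_par i k w) (dcell_disjoint hpw)
            have : θ (dcell (i + k) w ∩ dcell i z) = 0 := by
              rw [Set.disjoint_iff_inter_eq_empty.1 hdisj, measure_empty]
            simp [hν w, this]
        apply Finset.sum_congr rfl
        intro w hw
        have hpw : par k w = z := (Finset.mem_filter.1 hw).2
        have hsub : dcell (i + k) w ⊆ dcell i z := hpw ▸ dcell_subset_par i k w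
        rw [hν w, Set.inter_eq_self_of_subset_left hsub, ENNReal.toReal_mul, ENNReal.toReal_inv,
          mul_comm ((θ (dcell i z)).toReal)⁻¹ ((θ (dcell (i + k) w)).toReal), div_eq_mul_inv]
      rw [hgz, Finset.mul_sum]
      have hstep : ∀ w ∈ T'.filter (fun w => par k w = z),
          (θ (dcell i z)).toReal * phi ((θ (dcell (i + k) w)).toReal / (θ (dcell i z)).toReal)
          = phi ((θ (dcell (i + k) w)).toReal)
            + (θ (dcell (i + k) w)).toReal * Real.logb 2 ((θ (dcell i z)).toReal) := by
        intro w _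
        exact phi_div_eq _ _ hpr ENNReal.toReal_nonneg
      rw [Finset.sum_congr rfl hstep, Finset.sum_add_distrib, ← Finset.sum_mul,
        ← cell_children_real θ hT' z]
      simp only [phi]
      ring
  rw [Finset.sum_congr rfl hterm, Finset.sum_sub_distrib,
    Finset.sum_fiberwise_of_maps_to hmaps, ← dyEnt_eq_sum θ hT, ← dyEnt_eq_sum θ hT']

end Integral

section Supp
variable {m : ℕ}

noncomputable def suppT (s : Set (EuclideanSpace ℝ (Fin m))) (hb : Bornology.IsBounded s)
    (n : ℕ) : Finset (Fin m → ℤ) := (finite_cells s hb n).toFinset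

lemma mem_suppT {s : Set (EuclideanSpace ℝ (Fin m))} {hb : Bornology.IsBounded s}
    {n : ℕ} {z : Fin m → ℤ} : z ∈ suppT s hb n ↔ (dcell n z ∩ s).Nonempty :=
  (finite_cells s hb n).mem_toFinset

lemma isSupp_suppT (θ : Measure (EuclideanSpace ℝ (Fin m)))
    {s : Set (EuclideanSpace ℝ (Fin m))} (hb : Bornology.IsBounded s)
    (hs : θ sᶜ = 0) (n : ℕ) : IsSupp θ n (suppT s hb n) := by
  intro z hz
  have hempty : dcell n z ∩ s = ∅ :=
    Set.not_nonempty_iff_eq_empty.1 (fun h => hz (mem_suppT.2 h))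
  have hsub : dcell n z ⊆ sᶜ := by
    intro x hx hxs
    exact absurd (Set.mem_inter hx hxs) (by rw [hempty]; exact Set.notMem_empty x)
  exact measure_mono_null hsub hs

lemma suppT_maps {s : Set (EuclideanSpace ℝ (Fin m))} (hb : Bornology.IsBounded s)
    (i k : ℕ) : ∀ w ∈ suppT s hb (i + k), par k w ∈ suppT s hb i := by
  intro w hw
  rw [mem_suppT] at hw ⊢
  obtain ⟨x, hx1, hx2⟩ := hw
  exact ⟨x, dcell_subset_par i k w hx1, hx2⟩

variable (θ : Measure (EuclideanSpace ℝ (Fin m))) [IsProbabilityMeasure θ]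
variable {s : Set (EuclideanSpace ℝ (Fin m))}

lemma dyEnt_mono (hb : Bornology.IsBounded s) (hs : θ sᶜ = 0) (i k : ℕ) : dyEnt θ i ≤ dyEnt θ (i + k) :=
  (dyEnt_pair θ (isSupp_suppT θ hb hs i) (isSupp_suppT θ hb hs (i + k))
    (suppT_maps hb i k)).1

lemma dyEnt_growth (hb : Bornology.IsBounded s) (hs : θ sᶜ = 0) (i k : ℕ) :
    dyEnt θ (i + k) ≤ dyEnt θ i + (k * m : ℕ) :=
  (dyEnt_pair θ (isSupp_suppT θ hb hs i) (isSupp_suppT θ hb hs (i + k))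
    (suppT_maps hb i k)).2

lemma dyEnt_nn (hb : Bornology.IsBounded s) (hs : θ sᶜ = 0) (n : ℕ) : 0 ≤ dyEnt θ n :=
  dyEnt_nonneg θ (isSupp_suppT θ hb hs n)

lemma integral_key (hb : Bornology.IsBounded s) (hs : θ sᶜ = 0) (i k : ℕ) :
    ∫ x, dyEnt (dyComp θ i x) (i + k) ∂θ = dyEnt θ (i + k) - dyEnt θ i :=
  integral_dyEnt_comp θ (isSupp_suppT θ hb hs i) (isSupp_suppT θ hb hs (i + k))
    (suppT_maps hb i k)

lemma dyEnt_base (hb : Bornology.IsBounded s) (hs : θ sᶜ = 0) (l : ℕ) (C : ℝ) (hC : 1 ≤ C)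
    (hd : Metric.diam s ≤ C * (2:ℝ) ^ (-(l:ℤ))) :
    dyEnt θ l ≤ (m : ℝ) * Real.logb 2 (((2 * ⌈C⌉ + 1).toNat : ℝ)) := by
  have hsne : s.Nonempty := by
    rw [Set.nonempty_iff_ne_empty]
    intro h
    rw [h, Set.compl_empty, measure_univ] at hs
    exact one_ne_zero hs
  obtain ⟨x₀, hx₀⟩ := hsne
  have hsub : suppT s hb l ⊆
      Finset.Icc (fun j => dIndex l x₀ j - ⌈C⌉) (fun j => dIndex l x₀ j + ⌈C⌉) := by
    intro z hz
    exact cells_subset_Icc s hb x₀ hx₀ l C hd (mem_suppT.1 hz)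
  have hCpos : (1:ℤ) ≤ ⌈C⌉ := by
    have := Int.le_ceil C
    exact_mod_cast Int.one_le_ceil_iff.2 (by linarith)
  have hNpos : 0 < (2 * ⌈C⌉ + 1).toNat := by omega
  have hcard : (suppT s hb l).card ≤ (2 * ⌈C⌉ + 1).toNat ^ m := by
    calc (suppT s hb l).card ≤ _ := Finset.card_le_card hsub
      _ = (2 * ⌈C⌉ + 1).toNat ^ m := by
        rw [Pi.card_Icc]
        have : ∀ j : Fin m, (Finset.Icc (dIndex l x₀ j - ⌈C⌉) (dIndex l x₀ j + ⌈C⌉)).card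
            = (2 * ⌈C⌉ + 1).toNat := by
          intro j
          rw [Int.card_Icc]
          congr 1
          ring
        simp only [this, Finset.prod_const, Finset.card_univ, Fintype.card_fin]
  have h1 := sum_phi_upper (suppT s hb l) (fun z => (θ (dcell l z)).toReal)
    (fun z _ => ENNReal.toReal_nonneg) ((2 * ⌈C⌉ + 1).toNat ^ m) hcard (by positivity)
  rw [sum_cells_real θ (isSupp_suppT θ hb hs l), phi_one, one_mul, zero_add] at h1
  rw [dyEnt_eq_sum θ (isSupp_suppT θ hb hs l)]
  calc ∑ z ∈ suppT s hb l, phi ((θ (dcell l z)).toReal)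
      ≤ Real.logb 2 (((2 * ⌈C⌉ + 1).toNat ^ m : ℕ) : ℝ) := h1
    _ = (m : ℝ) * Real.logb 2 (((2 * ⌈C⌉ + 1).toNat : ℝ)) := by
        push_cast
        rw [Real.logb_pow]

end Supp

end MSEAux

set_option maxHeartbeats 1000000 in
/-- Multiscale entropy formula: for a compactly supported probability measure `θ` on `ℝ^m`
with `diam(supp θ) ≤ C·2^{-l}`, and `n ≥ k ≥ 1`,
`(1/n)·H(θ, D_{l+n}) = E_{l ≤ i ≤ l+n}[(1/k)·H(θ_{x,i}, D_{i+k})] + O_C(k/n)`: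
the normalized dyadic entropy at scale `l+n` equals the average over scales
`i ∈ {l,...,l+n}` and over level-`i` components of the normalized entropies across `k`
further dyadic levels, up to an error at most a constant (depending on `C` and `m`)
times `k/n`. -/
theorem multiscale_entropy_formula (m : ℕ) (C : ℝ) (hC : 1 ≤ C) :
    ∃ K : ℝ, 0 < K ∧
      ∀ (θ : Measure (EuclideanSpace ℝ (Fin m))) [IsProbabilityMeasure θ],
      ∀ n k l : ℕ, 1 ≤ k → k ≤ n →
      (∃ s : Set (EuclideanSpace ℝ (Fin m)), IsCompact s ∧ θ sᶜ = 0 ∧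
        Metric.diam s ≤ C * (2 : ℝ) ^ (-(l : ℤ))) →
      |(1 / (n : ℝ)) * dyEnt θ (l + n) -
          (1 / ((n : ℝ) + 1)) * ∑ i ∈ Finset.Icc l (l + n),
            ∫ x, (1 / (k : ℝ)) * dyEnt (dyComp θ i x) (i + k) ∂θ| ≤
        K * (k : ℝ) / (n : ℝ) := by
  classical
  set K₀ : ℝ := (m : ℝ) * Real.logb 2 (((2 * ⌈C⌉ + 1).toNat : ℝ)) with hK₀
  have hCeil : (1:ℤ) ≤ ⌈C⌉ := Int.one_le_ceil_iff.2 (by linarith)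
  have hK₀nn : 0 ≤ K₀ := by
    apply mul_nonneg (Nat.cast_nonneg m)
    apply Real.logb_nonneg (by norm_num)
    have h3 : (1:ℕ) ≤ (2 * ⌈C⌉ + 1).toNat := by omega
    exact_mod_cast h3
  refine ⟨2 * K₀ + 3 * m + 1, by positivity, ?_⟩
  intro θ _ n k l hk hkn hsupp
  obtain ⟨s, hcomp, hs, hdiam⟩ := hsupp
  have hb : Bornology.IsBounded s := hcomp.isBounded
  set h : ℕ → ℝ := fun j => dyEnt θ (l + j) with hh
  -- basic facts about h
  have hmono : ∀ a b : ℕ, a ≤ b → h a ≤ h b := by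
    intro a b hab
    have := dyEnt_mono θ hb hs (l + a) (b - a)
    rwa [show l + a + (b - a) = l + b by omega] at this
  have hgrow : ∀ a b : ℕ, a ≤ b → h b ≤ h a + (((b - a) * m : ℕ) : ℝ) := by
    intro a b hab
    have := dyEnt_growth θ hb hs (l + a) (b - a)
    rwa [show l + a + (b - a) = l + b by omega] at this
  have hnn : ∀ j, 0 ≤ h j := fun j => dyEnt_nn θ hb hs (l + j)
  have hbase : h 0 ≤ K₀ := by
    have := dyEnt_base θ hb hs l C hC hdiam
    simpa [hh] using this
  -- rewrite the integrals
  have hint : ∀ i ∈ Finset.Icc l (l + n),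
      ∫ x, (1 / (k:ℝ)) * dyEnt (dyComp θ i x) (i + k) ∂θ
      = (1 / (k:ℝ)) * (dyEnt θ (i + k) - dyEnt θ i) := by
    intro i _
    rw [integral_const_mul, integral_key θ hb hs i k]
  rw [Finset.sum_congr rfl hint]
  -- telescoping
  set A : ℝ := ∑ j ∈ Finset.Ico (n + 1) (n + 1 + k), h j with hA
  set B : ℝ := ∑ j ∈ Finset.range k, h j with hB
  have hsum : ∑ i ∈ Finset.Icc l (l + n), (1 / (k:ℝ)) * (dyEnt θ (i + k) - dyEnt θ i)
      = (1 / (k:ℝ)) * (A - B) := by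
    rw [← Finset.mul_sum]
    congr 1
    have e1 : ∑ i ∈ Finset.Icc l (l + n), (dyEnt θ (i + k) - dyEnt θ i)
        = ∑ j ∈ Finset.range (n + 1), (h (j + k) - h j) := by
      rw [← Finset.Ico_add_one_right_eq_Icc, Finset.sum_Ico_eq_sum_range]
      have hcard : l + n + 1 - l = n + 1 := by omega
      rw [hcard]
      apply Finset.sum_congr rfl
      intro j _
      have e1a : l + j + k = l + (j + k) := by omega
      rw [e1a]
    rw [e1, Finset.sum_sub_distrib]
    have e3 : ∑ j ∈ Finset.range (n + 1), h (j + k) = ∑ j ∈ Finset.Ico k (n + 1 + k), h j := by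
      rw [Finset.sum_Ico_eq_sum_range]
      have hcard : n + 1 + k - k = n + 1 := by omega
      rw [hcard]
      apply Finset.sum_congr rfl
      intro j _
      rw [add_comm]
    have e4 : ∑ j ∈ Finset.Ico k (n + 1), h j + A = ∑ j ∈ Finset.Ico k (n + 1 + k), h j :=
      Finset.sum_Ico_consecutive h (by omega) (by omega)
    have e5 : B + ∑ j ∈ Finset.Ico k (n + 1), h j = ∑ j ∈ Finset.range (n + 1), h j := by
      rw [Finset.range_eq_Ico, hB, Finset.range_eq_Ico]
      exact Finset.sum_Ico_consecutive h (by omega) (by omega)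
    rw [e3, ← e4, ← e5]
    ring
  rw [hsum]
  -- numeric bounds
  have hkR : (1:ℝ) ≤ (k:ℝ) := by exact_mod_cast hk
  have hnR : (k:ℝ) ≤ (n:ℝ) := by exact_mod_cast hkn
  have hn1 : (1:ℝ) ≤ (n:ℝ) := le_trans hkR hnR
  have hnpos : (0:ℝ) < n := by linarith
  have hkpos : (0:ℝ) < k := by linarith
  have hmnn : (0:ℝ) ≤ (m:ℝ) := Nat.cast_nonneg m
  have hA1 : (k:ℝ) * h n ≤ A := by
    have hc := Finset.card_nsmul_le_sum (Finset.Ico (n + 1) (n + 1 + k)) h (h n)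
      (fun j hj => hmono n j (by rw [Finset.mem_Ico] at hj; omega))
    rw [Nat.card_Ico, show n + 1 + k - (n + 1) = k by omega, nsmul_eq_mul] at hc
    exact hc
  have hA2 : A ≤ (k:ℝ) * (h n + (k:ℝ) * (m:ℝ)) := by
    have hc := Finset.sum_le_card_nsmul (Finset.Ico (n + 1) (n + 1 + k)) h
      (h n + (k:ℝ) * (m:ℝ)) ?bnd
    case bnd =>
      intro j hj
      rw [Finset.mem_Ico] at hj
      have h1 := hgrow n j (by omega)
      have h2 : ((j - n) * m : ℕ) ≤ (k * m : ℕ) := Nat.mul_le_mul_right _ (by omega)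
      have h2' : (((j - n) * m : ℕ) : ℝ) ≤ (k:ℝ) * (m:ℝ) := by
        push_cast at h2 ⊢
        exact_mod_cast h2
      linarith
    rw [Nat.card_Ico, show n + 1 + k - (n + 1) = k by omega, nsmul_eq_mul] at hc
    exact hc
  have hB1 : (0:ℝ) ≤ B := Finset.sum_nonneg fun j _ => hnn j
  have hB2 : B ≤ (k:ℝ) * (K₀ + (k:ℝ) * (m:ℝ)) := by
    have hc := Finset.sum_le_card_nsmul (Finset.range k) h (K₀ + (k:ℝ) * (m:ℝ)) ?bnd
    case bnd =>
      intro j hj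
      rw [Finset.mem_range] at hj
      have h1 := hgrow 0 j (Nat.zero_le j)
      have h2 : ((j - 0) * m : ℕ) ≤ (k * m : ℕ) := Nat.mul_le_mul_right _ (by omega)
      have h2' : (((j - 0) * m : ℕ) : ℝ) ≤ (k:ℝ) * (m:ℝ) := by
        push_cast at h2 ⊢
        exact_mod_cast h2
      linarith
    rw [Finset.card_range, nsmul_eq_mul] at hc
    exact hc
  have hhn2 : h n ≤ K₀ + (n:ℝ) * (m:ℝ) := by
    have h1 := hgrow 0 n (Nat.zero_le n)
    have h2 : (((n - 0) * m : ℕ) : ℝ) = (n:ℝ) * (m:ℝ) := by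
      rw [Nat.sub_zero]; push_cast; ring
    rw [h2] at h1
    linarith
  have hhn0 : 0 ≤ h n := hnn n
  -- decompose the error
  have hgoal : (1 / (n:ℝ)) * dyEnt θ (l + n) - (1 / ((n:ℝ) + 1)) * ((1 / (k:ℝ)) * (A - B))
      = h n / ((n:ℝ) * ((n:ℝ) + 1)) + ((k:ℝ) * h n - A) / ((k:ℝ) * ((n:ℝ) + 1))
        + B / ((k:ℝ) * ((n:ℝ) + 1)) := by
    have hhn : dyEnt θ (l + n) = h n := rfl
    rw [hhn]
    field_simp
    ring
  rw [hgoal]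
  clear hgoal hsum hint hmono hgrow hh hA hB
  have habs := abs_add_three (h n / ((n:ℝ) * ((n:ℝ) + 1)))
    (((k:ℝ) * h n - A) / ((k:ℝ) * ((n:ℝ) + 1))) (B / ((k:ℝ) * ((n:ℝ) + 1)))
  refine le_trans habs ?_
  have hd1 : |h n / ((n:ℝ) * ((n:ℝ) + 1))| ≤ (K₀ + m) * (k:ℝ) / (n:ℝ) := by
    rw [abs_of_nonneg (div_nonneg hhn0 (by positivity))]
    rw [div_le_div_iff₀ (by positivity) hnpos]
    have hnn1 : (0:ℝ) ≤ (n:ℝ) * ((n:ℝ) + 1) := by positivity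
    have hq : (n:ℝ) * ((n:ℝ) + 1) ≤ (k:ℝ) * ((n:ℝ) * ((n:ℝ) + 1)) := by
      nlinarith [mul_nonneg (sub_nonneg.2 hkR) hnn1]
    have hx1 : (n:ℝ) ≤ (k:ℝ) * ((n:ℝ) * ((n:ℝ) + 1)) := by
      nlinarith [mul_pos hnpos hnpos]
    have hx2 : (n:ℝ) * (n:ℝ) ≤ (k:ℝ) * ((n:ℝ) * ((n:ℝ) + 1)) := by
      nlinarith [mul_pos hnpos hnpos]
    nlinarith [mul_le_mul_of_nonneg_right hhn2 hnpos.le,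
      mul_le_mul_of_nonneg_left hx1 hK₀nn, mul_le_mul_of_nonneg_left hx2 hmnn]
  have hd2 : |((k:ℝ) * h n - A) / ((k:ℝ) * ((n:ℝ) + 1))| ≤ (m:ℝ) * (k:ℝ) / (n:ℝ) := by
    rw [abs_div, abs_of_nonneg (by positivity : (0:ℝ) ≤ (k:ℝ) * ((n:ℝ) + 1))]
    rw [div_le_div_iff₀ (by positivity) hnpos]
    have hkkm : (0:ℝ) ≤ (m:ℝ) * ((k:ℝ) * (k:ℝ)) :=
      mul_nonneg hmnn (mul_nonneg hkpos.le hkpos.le)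
    have habs2 : |(k:ℝ) * h n - A| ≤ (k:ℝ) * ((k:ℝ) * (m:ℝ)) := by
      rw [abs_le]
      constructor
      · nlinarith [hA2]
      · nlinarith [hA1]
    nlinarith [mul_le_mul_of_nonneg_right habs2 hnpos.le, hkkm]
  have hd3 : |B / ((k:ℝ) * ((n:ℝ) + 1))| ≤ (K₀ + m) * (k:ℝ) / (n:ℝ) := by
    rw [abs_of_nonneg (div_nonneg hB1 (by positivity))]
    rw [div_le_div_iff₀ (by positivity) hnpos]
    have hx3 : (k:ℝ) * (n:ℝ) ≤ (k:ℝ) * (k:ℝ) * ((n:ℝ) + 1) := by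
      nlinarith [mul_nonneg (sub_nonneg.2 hkR) (mul_nonneg hkpos.le hnpos.le),
        mul_pos hkpos hnpos]
    have hx4 : (k:ℝ) * (k:ℝ) * (n:ℝ) ≤ (k:ℝ) * (k:ℝ) * ((n:ℝ) + 1) := by
      nlinarith [mul_pos hkpos hkpos]
    nlinarith [mul_le_mul_of_nonneg_right hB2 hnpos.le,
      mul_le_mul_of_nonneg_left hx3 hK₀nn, mul_le_mul_of_nonneg_left hx4 hmnn]
  have hfin : (K₀ + m) * (k:ℝ) / (n:ℝ) + (m:ℝ) * (k:ℝ) / (n:ℝ) + (K₀ + m) * (k:ℝ) / (n:ℝ)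
      ≤ (2 * K₀ + 3 * m + 1) * (k:ℝ) / (n:ℝ) := by
    rw [← add_div, ← add_div, div_le_div_iff₀ hnpos hnpos]
    nlinarith [mul_pos hkpos hnpos]
  linarith [hd1, hd2, hd3, hfin]
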